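/- Let Z be a type, d ≥ 1, and ℓ : ℝ^d → Z → Z → ℝ a pairwise loss differentiable in its first argument with ‖∇ℓ(w, z, z')‖ ≤ L for all w, z, z'. Let S, S' : Fin n → Z be neighboring samples (n ≥ 2), let α_1, …, α_{T−1} ≥ 0 be step sizes, and for each path ξ : Fin T → Fin n let w_t(ξ) and w'_t(ξ) denote the SGD iterates for pairwise learning based on S and S' respectively, with δ_t(ξ) = ‖w_t(ξ) − w'_t(ξ)‖. Fix 1 < t ≤ T and η_t ≥ 0, and assume that for every path ξ both update maps v ↦ v − (α_{t−1}/(t−1))·Σ_{j=1}^{t−1} ∇ℓ(v, S(ξ_t), S(ξ_j)) and v ↦ v − (α_{t−1}/(t−1))·Σ_{j=1}^{t−1} ∇ℓ(v, S'(ξ_t), S'(ξ_j)) are η_t-expansive. Then, under the random selection rule, E_ξ[δ_t] ≤ ((1/n)·min(η_t, 1) + (1 − 1/n)·η_t)·E_ξ[δ_{t−1}] + (4L/n)·α_{t−1}. -/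

import Mathlib

lemma sum_update_aux {n T : ℕ} (p : Fin T) (f : (Fin T → Fin n) → ℝ) :
    ∑ ξ : Fin T → Fin n, ∑ i : Fin n, f (Function.update ξ p i)
      = (n : ℝ) * ∑ ξ : Fin T → Fin n, f ξ := by
  have h0 : ∑ ξ : Fin T → Fin n, ∑ i : Fin n, f (Function.update ξ p i)
      = ∑ x : (Fin T → Fin n) × Fin n, f (Function.update x.1 p x.2) :=
    (Fintype.sum_prod_type (f := fun x => f (Function.update x.1 p x.2))).symm
  have h1 : ∑ x : (Fin T → Fin n) × Fin n, f (Function.update x.1 p x.2)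
      = ∑ x : (Fin T → Fin n) × Fin n, f x.1 :=
    Fintype.sum_equiv
      ⟨fun x => (Function.update x.1 p x.2, x.1 p),
       fun x => (Function.update x.1 p x.2, x.1 p),
       fun x => by simp, fun x => by simp⟩ _ _ (fun x => rfl)
  have h2 : ∑ x : (Fin T → Fin n) × Fin n, f x.1
      = ∑ ξ : Fin T → Fin n, ∑ _i : Fin n, f ξ :=
    Fintype.sum_prod_type (f := fun x => f x.1)
  rw [h0, h1, h2]
  simp [Finset.sum_const, Finset.mul_sum, mul_comm]

lemma iter_dep {n T : ℕ} {β : Type*} (w : (Fin T → Fin n) → ℕ → β)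
    (hw1 : ∀ ξ ζ : Fin T → Fin n, w ξ 1 = w ζ 1)
    (hstep : ∀ ξ ζ : Fin T → Fin n, ∀ s, 2 ≤ s → s ≤ T →
      (∀ j : Fin T, (j : ℕ) < s → ξ j = ζ j) → w ξ (s - 1) = w ζ (s - 1) → w ξ s = w ζ s) :
    ∀ s, 1 ≤ s → s ≤ T → ∀ ξ ζ : Fin T → Fin n,
      (∀ j : Fin T, (j : ℕ) < s → ξ j = ζ j) → w ξ s = w ζ s := by
  intro s
  induction s using Nat.strong_induction_on with
  | _ s ih =>
    intro hs1 hsT ξ ζ hagree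
    rcases eq_or_lt_of_le hs1 with h1 | h2
    · rw [← h1]; exact hw1 ξ ζ
    · exact hstep ξ ζ s h2 hsT hagree
        (ih (s - 1) (by omega) (by omega) (by omega) ξ ζ (fun j hj => hagree j (by omega)))

lemma step_bound {E : Type*} [NormedAddCommGroup E] [NormedSpace ℝ E]
    (A A' X Y Y' : E) (cs η b : ℝ) (hcs : 0 ≤ cs)
    (hexp : ‖(A - cs • X) - (A' - cs • Y)‖ ≤ η * ‖A - A'‖)
    (hYY' : ‖Y' - Y‖ ≤ b) :
    ‖(A - cs • X) - (A' - cs • Y')‖ ≤ η * ‖A - A'‖ + cs * b := by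
  calc ‖(A - cs • X) - (A' - cs • Y')‖
      ≤ ‖(A - cs • X) - (A' - cs • Y)‖ + ‖(A' - cs • Y) - (A' - cs • Y')‖ := by
        simpa [dist_eq_norm] using dist_triangle (A - cs • X) (A' - cs • Y) (A' - cs • Y')
    _ ≤ η * ‖A - A'‖ + cs * b := by
        refine add_le_add hexp ?_
        have h : (A' - cs • Y) - (A' - cs • Y') = cs • (Y' - Y) := by
          rw [smul_sub]; abel
        rw [h, norm_smul, Real.norm_eq_abs, abs_of_nonneg hcs]
        exact mul_le_mul_of_nonneg_left hYY' hcs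

lemma step_bound_one {E : Type*} [NormedAddCommGroup E] [NormedSpace ℝ E]
    (A A' X Y : E) (cs bX bY : ℝ) (hcs : 0 ≤ cs) (hX : ‖X‖ ≤ bX) (hY : ‖Y‖ ≤ bY) :
    ‖(A - cs • X) - (A' - cs • Y)‖ ≤ ‖A - A'‖ + cs * (bX + bY) := by
  have h : (A - cs • X) - (A' - cs • Y) = (A - A') + (cs • Y - cs • X) := by abel
  rw [h]
  calc ‖(A - A') + (cs • Y - cs • X)‖ ≤ ‖A - A'‖ + ‖cs • Y - cs • X‖ := norm_add_le _ _
    _ ≤ ‖A - A'‖ + (‖cs • Y‖ + ‖cs • X‖) := by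
        exact add_le_add le_rfl (norm_sub_le _ _)
    _ ≤ ‖A - A'‖ + cs * (bX + bY) := by
        rw [norm_smul, norm_smul, Real.norm_eq_abs, abs_of_nonneg hcs]
        nlinarith [mul_le_mul_of_nonneg_left hX hcs, mul_le_mul_of_nonneg_left hY hcs]


/-- **Theorem 5 (random selection rule).** Let `w ξ t` and `w' ξ t` be the pairwise-SGD iterates
along the path `ξ` based on two neighboring samples `S, S'`.  If at step `t` both update maps are
`η`-expansive for every path, then the average of `δ_t = ‖w_t − w'_t‖` over all `n^T` paths
satisfies
`E[δ_t] ≤ ((1/n)·min(η,1) + (1 − 1/n)·η)·E[δ_{t−1}] + (4L/n)·α_{t−1}`. -/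
theorem pairwise_sgd_recursive_stability_bound
    {Z : Type*} (d : ℕ) (hd : 1 ≤ d) (n T : ℕ) (hn : 2 ≤ n)
    (ℓ : EuclideanSpace ℝ (Fin d) → Z → Z → ℝ)
    (g : EuclideanSpace ℝ (Fin d) → Z → Z → EuclideanSpace ℝ (Fin d)) (L : ℝ)
    (hdiff : ∀ (v : EuclideanSpace ℝ (Fin d)) (z z' : Z),
      HasGradientAt (fun u => ℓ u z z') (g v z z') v)
    (hL : ∀ (v : EuclideanSpace ℝ (Fin d)) (z z' : Z), ‖g v z z'‖ ≤ L)
    (S S' : Fin n → Z) (i₀ : Fin n) (hSS' : ∀ i, i ≠ i₀ → S i = S' i)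
    (α : ℕ → ℝ) (hα : ∀ s, 0 ≤ α s)
    (w w' : (Fin T → Fin n) → ℕ → EuclideanSpace ℝ (Fin d))
    (hw1 : ∀ ξ, w ξ 1 = 0) (hw1' : ∀ ξ, w' ξ 1 = 0)
    (hrec : ∀ (ξ : Fin T → Fin n) (s : ℕ) (hs2 : 2 ≤ s) (hsT : s ≤ T),
      w ξ s = w ξ (s - 1) - (α (s - 1) / ((s : ℝ) - 1)) •
        ∑ j : Fin (s - 1), g (w ξ (s - 1)) (S (ξ ⟨s - 1, by omega⟩))
          (S (ξ ⟨(j : ℕ), lt_of_lt_of_le j.isLt (by omega)⟩)))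
    (hrec' : ∀ (ξ : Fin T → Fin n) (s : ℕ) (hs2 : 2 ≤ s) (hsT : s ≤ T),
      w' ξ s = w' ξ (s - 1) - (α (s - 1) / ((s : ℝ) - 1)) •
        ∑ j : Fin (s - 1), g (w' ξ (s - 1)) (S' (ξ ⟨s - 1, by omega⟩))
          (S' (ξ ⟨(j : ℕ), lt_of_lt_of_le j.isLt (by omega)⟩)))
    (t : ℕ) (ht1 : 1 < t) (htT : t ≤ T)
    (η : ℝ) (hη : 0 ≤ η)
    (hexp : ∀ ξ : Fin T → Fin n, ∀ v v' : EuclideanSpace ℝ (Fin d),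
      ‖(v - (α (t - 1) / ((t : ℝ) - 1)) •
          ∑ j : Fin (t - 1), g v (S (ξ ⟨t - 1, by omega⟩))
            (S (ξ ⟨(j : ℕ), lt_of_lt_of_le j.isLt (by omega)⟩))) -
        (v' - (α (t - 1) / ((t : ℝ) - 1)) •
          ∑ j : Fin (t - 1), g v' (S (ξ ⟨t - 1, by omega⟩))
            (S (ξ ⟨(j : ℕ), lt_of_lt_of_le j.isLt (by omega)⟩)))‖ ≤ η * ‖v - v'‖)
    (hexp' : ∀ ξ : Fin T → Fin n, ∀ v v' : EuclideanSpace ℝ (Fin d),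
      ‖(v - (α (t - 1) / ((t : ℝ) - 1)) •
          ∑ j : Fin (t - 1), g v (S' (ξ ⟨t - 1, by omega⟩))
            (S' (ξ ⟨(j : ℕ), lt_of_lt_of_le j.isLt (by omega)⟩))) -
        (v' - (α (t - 1) / ((t : ℝ) - 1)) •
          ∑ j : Fin (t - 1), g v' (S' (ξ ⟨t - 1, by omega⟩))
            (S' (ξ ⟨(j : ℕ), lt_of_lt_of_le j.isLt (by omega)⟩)))‖ ≤ η * ‖v - v'‖) :
    (1 / (n : ℝ) ^ T) * ∑ ξ : Fin T → Fin n, ‖w ξ t - w' ξ t‖ ≤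
      ((1 / (n : ℝ)) * min η 1 + (1 - 1 / (n : ℝ)) * η) *
          ((1 / (n : ℝ) ^ T) * ∑ ξ : Fin T → Fin n, ‖w ξ (t - 1) - w' ξ (t - 1)‖)
        + (4 * L / (n : ℝ)) * α (t - 1) := by
    classical
  have ht2 : 2 ≤ t := ht1
  have hmT : t - 1 < T := by omega
  have hn0 : (0:ℝ) < (n:ℝ) := by positivity
  have hnne : (n:ℝ) ≠ 0 := ne_of_gt hn0
  have htR : (1:ℝ) ≤ (t:ℝ) - 1 := by
    have : (2:ℝ) ≤ (t:ℝ) := by exact_mod_cast ht2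
    linarith
  have htpos : (0:ℝ) < (t:ℝ) - 1 := by linarith
  have hL0 : 0 ≤ L := le_trans (norm_nonneg _) (hL 0 (S i₀) (S i₀))
  have hcs0 : 0 ≤ α (t - 1) / ((t:ℝ) - 1) := div_nonneg (hα _) (le_of_lt htpos)
  have hcast : ((t - 1 : ℕ) : ℝ) = (t:ℝ) - 1 := by
    have h : t - 1 + 1 = t := by omega
    have := congrArg (fun m : ℕ => (m : ℝ)) h
    push_cast at this
    linarith
  have hjT : ∀ j : Fin (t - 1), (j : ℕ) < T := fun j => lt_of_lt_of_le j.isLt (by omega)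
  set p : Fin T := ⟨t - 1, hmT⟩ with hp
  -- norm of sums bound
  have hsum_norm : ∀ (c : ℝ) (u : Fin (t - 1) → EuclideanSpace ℝ (Fin d)),
      (∀ j, ‖u j‖ ≤ c) → ‖∑ j : Fin (t - 1), u j‖ ≤ ((t:ℝ) - 1) * c := by
    intro c u hu
    calc ‖∑ j : Fin (t - 1), u j‖ ≤ ∑ j : Fin (t - 1), ‖u j‖ := norm_sum_le _ _
      _ ≤ ∑ _j : Fin (t - 1), c := Finset.sum_le_sum fun j _ => hu j
      _ = ((t - 1 : ℕ) : ℝ) * c := by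
          simp [Finset.sum_const, Finset.card_univ, nsmul_eq_mul]
      _ = ((t:ℝ) - 1) * c := by rw [hcast]
  have hgdiff : ∀ (v : EuclideanSpace ℝ (Fin d)) z1 z2 z3 z4,
      ‖g v z1 z2 - g v z3 z4‖ ≤ 2 * L := by
    intro v z1 z2 z3 z4
    calc ‖g v z1 z2 - g v z3 z4‖ ≤ ‖g v z1 z2‖ + ‖g v z3 z4‖ := norm_sub_le _ _
      _ ≤ L + L := add_le_add (hL _ _ _) (hL _ _ _)
      _ = 2 * L := by ring
  -- dependence of the iterates on the coordinates below s
  have hdepgen : ∀ (W : (Fin T → Fin n) → ℕ → EuclideanSpace ℝ (Fin d)) (Sc : Fin n → Z),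
      (∀ ξ, W ξ 1 = 0) →
      (∀ (ξ : Fin T → Fin n) (s : ℕ) (hs2 : 2 ≤ s) (hsT : s ≤ T),
        W ξ s = W ξ (s - 1) - (α (s - 1) / ((s : ℝ) - 1)) •
          ∑ j : Fin (s - 1), g (W ξ (s - 1)) (Sc (ξ ⟨s - 1, by omega⟩))
            (Sc (ξ ⟨(j : ℕ), lt_of_lt_of_le j.isLt (by omega)⟩))) →
      ∀ s, 1 ≤ s → s ≤ T → ∀ ξ ζ : Fin T → Fin n,
        (∀ j : Fin T, (j : ℕ) < s → ξ j = ζ j) → W ξ s = W ζ s := by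
    intro W Sc hW1 hWrec
    refine iter_dep W (fun ξ ζ => by rw [hW1, hW1]) ?_
    intro ξ ζ s hs2 hsT hag hprev
    rw [hWrec ξ s hs2 hsT, hWrec ζ s hs2 hsT, hprev]
    have h1 : ξ ⟨s - 1, by omega⟩ = ζ ⟨s - 1, by omega⟩ :=
      hag ⟨s - 1, by omega⟩ (show s - 1 < s by omega)
    rw [h1]
    congr 2
    refine Finset.sum_congr rfl fun j _ => ?_
    rw [hag ⟨(j : ℕ), lt_of_lt_of_le j.isLt (by omega)⟩
      (show (j : ℕ) < s from lt_of_lt_of_le j.isLt (by omega))]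
  have hdepw : ∀ (ξ : Fin T → Fin n) (i : Fin n),
      w (Function.update ξ p i) (t - 1) = w ξ (t - 1) := by
    intro ξ i
    refine hdepgen w S hw1 hrec (t - 1) (by omega) (by omega) _ _ fun j hj => ?_
    have hpv : (p : ℕ) = t - 1 := rfl
    exact Function.update_of_ne (Fin.ne_of_val_ne (show (j : ℕ) ≠ (p : ℕ) by rw [hpv]; omega)) i ξ
  have hdepw' : ∀ (ξ : Fin T → Fin n) (i : Fin n),
      w' (Function.update ξ p i) (t - 1) = w' ξ (t - 1) := by
    intro ξ i
    refine hdepgen w' S' hw1' hrec' (t - 1) (by omega) (by omega) _ _ fun j hj => ?_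
    have hpv : (p : ℕ) = t - 1 := rfl
    exact Function.update_of_ne (Fin.ne_of_val_ne (show (j : ℕ) ≠ (p : ℕ) by rw [hpv]; omega)) i ξ
  -- the pathwise key bound
  have key : ∀ ξ : Fin T → Fin n, ‖w ξ t - w' ξ t‖ ≤
      (if ξ p = i₀ then min η 1 else η) * ‖w ξ (t - 1) - w' ξ (t - 1)‖
        + (α (t - 1) / ((t:ℝ) - 1)) * (2 * L) *
          (if ξ p = i₀ then ((t:ℝ) - 1)
           else ((Finset.univ.filter (fun j : Fin (t - 1) => ξ ⟨(j : ℕ), hjT j⟩ = i₀)).card : ℝ)) := by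
    intro ξ
    rw [hrec ξ t ht2 htT, hrec' ξ t ht2 htT]
    by_cases hi : ξ p = i₀
    · rw [if_pos hi, if_pos hi]
      rcases le_total η 1 with hle | hle
      · rw [min_eq_left hle]
        refine le_trans (step_bound _ _ _ _ _ _ η (((t:ℝ) - 1) * (2 * L)) hcs0
          (hexp ξ _ _) ?_) (le_of_eq (by ring))
        show ‖(∑ j : Fin (t - 1), g (w' ξ (t - 1)) (S' (ξ p)) (S' (ξ ⟨(j : ℕ), hjT j⟩)))
            - (∑ j : Fin (t - 1), g (w' ξ (t - 1)) (S (ξ p)) (S (ξ ⟨(j : ℕ), hjT j⟩)))‖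
          ≤ ((t:ℝ) - 1) * (2 * L)
        rw [← Finset.sum_sub_distrib]
        exact hsum_norm (2 * L) _ fun j => hgdiff _ _ _ _ _
      · rw [min_eq_right hle]
        refine le_trans (step_bound_one _ _ _ _ _ (((t:ℝ) - 1) * L) (((t:ℝ) - 1) * L) hcs0
          ?_ ?_) (le_of_eq (by ring))
        · exact hsum_norm L _ fun j => hL _ _ _
        · exact hsum_norm L _ fun j => hL _ _ _
    · rw [if_neg hi, if_neg hi]
      refine le_trans (step_bound _ _ _ _ _ _ η
        (((Finset.univ.filter (fun j : Fin (t - 1) => ξ ⟨(j : ℕ), hjT j⟩ = i₀)).card : ℝ) * (2 * L))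
        hcs0 (hexp ξ _ _) ?_) (le_of_eq (by ring))
      show ‖(∑ j : Fin (t - 1), g (w' ξ (t - 1)) (S' (ξ p)) (S' (ξ ⟨(j : ℕ), hjT j⟩)))
          - (∑ j : Fin (t - 1), g (w' ξ (t - 1)) (S (ξ p)) (S (ξ ⟨(j : ℕ), hjT j⟩)))‖
        ≤ ((Finset.univ.filter (fun j : Fin (t - 1) => ξ ⟨(j : ℕ), hjT j⟩ = i₀)).card : ℝ) * (2 * L)
      rw [← Finset.sum_sub_distrib]
      have hz : S' (ξ p) = S (ξ p) := (hSS' _ hi).symm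
      calc ‖∑ j : Fin (t - 1), (g (w' ξ (t - 1)) (S' (ξ p)) (S' (ξ ⟨(j : ℕ), hjT j⟩))
              - g (w' ξ (t - 1)) (S (ξ p)) (S (ξ ⟨(j : ℕ), hjT j⟩)))‖
          ≤ ∑ j : Fin (t - 1), ‖g (w' ξ (t - 1)) (S' (ξ p)) (S' (ξ ⟨(j : ℕ), hjT j⟩))
              - g (w' ξ (t - 1)) (S (ξ p)) (S (ξ ⟨(j : ℕ), hjT j⟩))‖ := norm_sum_le _ _
        _ ≤ ∑ j : Fin (t - 1), (if ξ ⟨(j : ℕ), hjT j⟩ = i₀ then 2 * L else 0) := by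
            refine Finset.sum_le_sum fun j _ => ?_
            by_cases hj : ξ ⟨(j : ℕ), hjT j⟩ = i₀
            · rw [if_pos hj]; exact hgdiff _ _ _ _ _
            · rw [if_neg hj, hz, ← hSS' _ hj]
              simp
        _ = ((Finset.univ.filter (fun j : Fin (t - 1) => ξ ⟨(j : ℕ), hjT j⟩ = i₀)).card : ℝ)
            * (2 * L) := by
            rw [← Finset.sum_filter, Finset.sum_const, nsmul_eq_mul]

  -- counting lemmas
  have hcardfun : ∑ _ξ : Fin T → Fin n, (1:ℝ) = (n:ℝ)^T := by
    simp [Finset.sum_const, Finset.card_univ]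
  have hcount : ∀ r : Fin T, ∑ ξ : Fin T → Fin n, (if ξ r = i₀ then (1:ℝ) else 0)
      = (n:ℝ)^T / n := by
    intro r
    have h := sum_update_aux r (fun ξ => if ξ r = i₀ then (1:ℝ) else 0)
    have h2 : ∑ ξ : Fin T → Fin n, ∑ i : Fin n,
        (if (Function.update ξ r i) r = i₀ then (1:ℝ) else 0) = (n:ℝ)^T := by
      have e : ∀ ξ : Fin T → Fin n, ∑ i : Fin n,
          (if (Function.update ξ r i) r = i₀ then (1:ℝ) else 0) = 1 := by
        intro ξ
        simp [Function.update_self]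
      rw [Finset.sum_congr rfl fun ξ _ => e ξ]
      exact hcardfun
    rw [h2] at h
    rw [eq_div_iff hnne]
    linear_combination -h
  have hksum : ∑ ξ : Fin T → Fin n,
      ((Finset.univ.filter (fun j : Fin (t - 1) => ξ ⟨(j : ℕ), hjT j⟩ = i₀)).card : ℝ)
      = ((t:ℝ) - 1) * ((n:ℝ)^T / n) := by
    have e : ∀ ξ : Fin T → Fin n,
        ((Finset.univ.filter (fun j : Fin (t - 1) => ξ ⟨(j : ℕ), hjT j⟩ = i₀)).card : ℝ)
        = ∑ j : Fin (t - 1), (if ξ ⟨(j : ℕ), hjT j⟩ = i₀ then (1:ℝ) else 0) := by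
      intro ξ
      rw [Finset.sum_boole]
    rw [Finset.sum_congr rfl fun ξ _ => e ξ, Finset.sum_comm]
    rw [Finset.sum_congr rfl fun (j : Fin (t - 1)) _ => hcount ⟨(j:ℕ), hjT j⟩]
    rw [Finset.sum_const, Finset.card_univ, nsmul_eq_mul]
    simp [hcast]
  -- averaged c-weight identity
  have h1 : (n:ℝ) * ∑ ξ : Fin T → Fin n,
      (if ξ p = i₀ then min η 1 else η) * ‖w ξ (t - 1) - w' ξ (t - 1)‖
      = (min η 1 + ((n:ℝ) - 1) * η) * ∑ ξ : Fin T → Fin n, ‖w ξ (t - 1) - w' ξ (t - 1)‖ := by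
    rw [← sum_update_aux p
      (fun ξ => (if ξ p = i₀ then min η 1 else η) * ‖w ξ (t - 1) - w' ξ (t - 1)‖)]
    have hif : ∀ a b : ℝ, ∑ i : Fin n, (if i = i₀ then a else b) = a + ((n:ℝ) - 1) * b := by
      intro a b
      have e : ∀ i : Fin n, (if i = i₀ then a else b) = b + (if i = i₀ then a - b else 0) := by
        intro i; by_cases h : i = i₀ <;> simp [h]
      rw [Finset.sum_congr rfl fun i _ => e i, Finset.sum_add_distrib, Finset.sum_const,
        Finset.sum_ite_eq' Finset.univ i₀ (fun _ => a - b)]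
      simp [Finset.card_univ, nsmul_eq_mul]
      ring
    calc ∑ ξ : Fin T → Fin n, ∑ i : Fin n,
          (if Function.update ξ p i p = i₀ then min η 1 else η)
            * ‖w (Function.update ξ p i) (t - 1) - w' (Function.update ξ p i) (t - 1)‖
        = ∑ ξ : Fin T → Fin n, ∑ i : Fin n,
            (if i = i₀ then min η 1 else η) * ‖w ξ (t - 1) - w' ξ (t - 1)‖ := by
          refine Finset.sum_congr rfl fun ξ _ => Finset.sum_congr rfl fun i _ => ?_
          rw [hdepw ξ i, hdepw' ξ i, Function.update_self]
      _ = ∑ ξ : Fin T → Fin n,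
            (min η 1 + ((n:ℝ) - 1) * η) * ‖w ξ (t - 1) - w' ξ (t - 1)‖ := by
          refine Finset.sum_congr rfl fun ξ _ => ?_
          rw [← Finset.sum_mul, hif]
      _ = (min η 1 + ((n:ℝ) - 1) * η) * ∑ ξ : Fin T → Fin n, ‖w ξ (t - 1) - w' ξ (t - 1)‖ := by
          rw [Finset.mul_sum]
  -- bound for the sum of the extra terms
  have hq : ∑ ξ : Fin T → Fin n,
      (if ξ p = i₀ then ((t:ℝ) - 1)
       else ((Finset.univ.filter (fun j : Fin (t - 1) => ξ ⟨(j : ℕ), hjT j⟩ = i₀)).card : ℝ))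
      ≤ 2 * ((t:ℝ) - 1) * ((n:ℝ)^T / n) := by
    have hb : ∀ ξ : Fin T → Fin n,
        (if ξ p = i₀ then ((t:ℝ) - 1)
         else ((Finset.univ.filter (fun j : Fin (t - 1) => ξ ⟨(j : ℕ), hjT j⟩ = i₀)).card : ℝ))
        ≤ ((t:ℝ) - 1) * (if ξ p = i₀ then (1:ℝ) else 0)
          + ((Finset.univ.filter (fun j : Fin (t - 1) => ξ ⟨(j : ℕ), hjT j⟩ = i₀)).card : ℝ) := by
      intro ξ
      by_cases h : ξ p = i₀
      · rw [if_pos h, if_pos h, mul_one]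
        have : (0:ℝ) ≤ ((Finset.univ.filter
            (fun j : Fin (t - 1) => ξ ⟨(j : ℕ), hjT j⟩ = i₀)).card : ℝ) := Nat.cast_nonneg _
        linarith
      · rw [if_neg h, if_neg h, mul_zero, zero_add]
    calc ∑ ξ : Fin T → Fin n,
        (if ξ p = i₀ then ((t:ℝ) - 1)
         else ((Finset.univ.filter (fun j : Fin (t - 1) => ξ ⟨(j : ℕ), hjT j⟩ = i₀)).card : ℝ))
        ≤ ∑ ξ : Fin T → Fin n, (((t:ℝ) - 1) * (if ξ p = i₀ then (1:ℝ) else 0)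
          + ((Finset.univ.filter (fun j : Fin (t - 1) => ξ ⟨(j : ℕ), hjT j⟩ = i₀)).card : ℝ)) :=
          Finset.sum_le_sum fun ξ _ => hb ξ
      _ = ((t:ℝ) - 1) * ((n:ℝ)^T / n) + ((t:ℝ) - 1) * ((n:ℝ)^T / n) := by
          rw [Finset.sum_add_distrib, ← Finset.mul_sum, hcount p, hksum]
      _ = 2 * ((t:ℝ) - 1) * ((n:ℝ)^T / n) := by ring
  -- put it together
  have hmain : ∑ ξ : Fin T → Fin n, ‖w ξ t - w' ξ t‖ ≤
      (min η 1 + ((n:ℝ) - 1) * η) / n * ∑ ξ : Fin T → Fin n, ‖w ξ (t - 1) - w' ξ (t - 1)‖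
        + (4 * L * α (t - 1)) * ((n:ℝ)^T / n) := by
    have hs := Finset.sum_le_sum fun ξ (_ : ξ ∈ (Finset.univ : Finset (Fin T → Fin n))) => key ξ
    rw [Finset.sum_add_distrib] at hs
    refine le_trans hs (add_le_add ?_ ?_)
    · refine le_of_eq ?_
      rw [div_mul_eq_mul_div, eq_div_iff hnne]
      linear_combination h1
    · rw [← Finset.mul_sum]
      calc (α (t - 1) / ((t:ℝ) - 1)) * (2 * L) * (∑ ξ : Fin T → Fin n,
            (if ξ p = i₀ then ((t:ℝ) - 1)
             else ((Finset.univ.filter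
               (fun j : Fin (t - 1) => ξ ⟨(j : ℕ), hjT j⟩ = i₀)).card : ℝ)))
          ≤ (α (t - 1) / ((t:ℝ) - 1)) * (2 * L) * (2 * ((t:ℝ) - 1) * ((n:ℝ)^T / n)) := by
            refine mul_le_mul_of_nonneg_left hq (by positivity)
        _ = (4 * L * α (t - 1)) * ((n:ℝ)^T / n) := by
            field_simp
            ring
  have hpowpos : (0:ℝ) < (n:ℝ)^T := by positivity
  have hpowne : ((n:ℝ)^T) ≠ 0 := ne_of_gt hpowpos
  have hfinal := mul_le_mul_of_nonneg_left hmain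
    (le_of_lt (by positivity : (0:ℝ) < 1 / (n:ℝ)^T))
  calc (1 / (n:ℝ)^T) * ∑ ξ : Fin T → Fin n, ‖w ξ t - w' ξ t‖
      ≤ (1 / (n:ℝ)^T) * ((min η 1 + ((n:ℝ) - 1) * η) / n
          * ∑ ξ : Fin T → Fin n, ‖w ξ (t - 1) - w' ξ (t - 1)‖
        + (4 * L * α (t - 1)) * ((n:ℝ)^T / n)) := hfinal
    _ = ((1 / (n:ℝ)) * min η 1 + (1 - 1 / (n:ℝ)) * η) *
          ((1 / (n:ℝ)^T) * ∑ ξ : Fin T → Fin n, ‖w ξ (t - 1) - w' ξ (t - 1)‖)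
        + (4 * L / (n:ℝ)) * α (t - 1) := by
        field_simp
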